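/- Let k ≥ 2 be an integer and let H ⊆ ℚ_{≥0} be a finitely generated additive submonoid with ℕ ⊆ H such that every atom of H is strictly less than 1. Then there exists a finitely generated additive submonoid H' ⊆ ℚ_{≥0} with H ⊆ H', whose atoms are all strictly less than 1 and include all atoms of H, such that: (a) for every u ∈ H with u < 1, the set of factorizations of u in H equals the set of factorizations of u in H'; and (b) there are pairwise distinct elements q_1, …, q_k ∈ H' such that the set of atoms of H' is the disjoint union of the set of atoms of H and {q_1, …, q_k}, and the set of factorizations of 1 in H' is the disjoint union of the set of factorizations of 1 in H and the single multiset {q_1, …, q_k}. -/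

import Mathlib

/-- Base-`B` digit uniqueness. -/
lemma digits_unique : ∀ (n : ℕ) (B : ℕ) (c e : Fin n → ℕ), (∀ i, c i < B) → (∀ i, e i < B) →
    (∑ i, c i * B ^ (i : ℕ)) = (∑ i, e i * B ^ (i : ℕ)) → c = e := by
  intro n
  induction n with
  | zero => intro B c e _ _ _; funext i; exact absurd i.2 (by omega)
  | succ n ih =>
    intro B c e hc he hsum
    have hB : 0 < B := lt_of_le_of_lt (Nat.zero_le _) (hc 0)
    rw [Fin.sum_univ_succ, Fin.sum_univ_succ] at hsum
    have h1 : ∀ f : Fin (n+1) → ℕ, (∑ i : Fin n, f i.succ * B ^ (i.succ : ℕ))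
        = B * ∑ i : Fin n, f i.succ * B ^ (i : ℕ) := by
      intro f
      rw [Finset.mul_sum]
      refine Finset.sum_congr rfl fun i _ => ?_
      have : (i.succ : ℕ) = (i : ℕ) + 1 := rfl
      rw [this, pow_succ]; ring
    rw [h1 c, h1 e] at hsum
    simp only [Fin.val_zero, pow_zero, mul_one] at hsum
    set X := ∑ i : Fin n, c i.succ * B ^ (i : ℕ)
    set Y := ∑ i : Fin n, e i.succ * B ^ (i : ℕ)
    have h0 : c 0 = e 0 := by
      have h2 : (c 0 + B * X) % B = (e 0 + B * Y) % B := by rw [hsum]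
      rwa [Nat.add_mul_mod_self_left, Nat.add_mul_mod_self_left,
        Nat.mod_eq_of_lt (hc 0), Nat.mod_eq_of_lt (he 0)] at h2
    have hXY : X = Y := by
      rw [h0] at hsum
      have := Nat.add_left_cancel hsum
      exact Nat.eq_of_mul_eq_mul_left hB this
    have := ih B (fun i => c i.succ) (fun i => e i.succ) (fun i => hc i.succ) (fun i => he i.succ) hXY
    funext i
    rcases Fin.eq_zero_or_eq_succ i with rfl | ⟨j, rfl⟩
    · exact h0
    · exact congrFun this j

/-- If a sum of naturals over `Fin k` is `1`, it is an indicator. -/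
lemma sum_eq_one_indicator {k : ℕ} (c : Fin k → ℕ) (h : ∑ i, c i = 1) :
    ∃ j, ∀ i, c i = if i = j then 1 else 0 := by
  have h1 : ∃ j, c j ≠ 0 := by
    by_contra hc
    push_neg at hc
    rw [Finset.sum_eq_zero (fun i _ => hc i)] at h; omega
  obtain ⟨j, hj⟩ := h1
  have hcj : c j ≤ 1 := h ▸ Finset.single_le_sum (fun i _ => Nat.zero_le _) (Finset.mem_univ j)
  refine ⟨j, fun i => ?_⟩
  rcases eq_or_ne i j with rfl | hij
  · simp; omega
  · simp only [hij, if_false]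
    have hsub : ({i, j} : Finset (Fin k)) ⊆ Finset.univ := Finset.subset_univ _
    have := Finset.sum_le_sum_of_subset hsub (f := c)
    rw [Finset.sum_pair hij, h] at this
    omega

/-- Membership in the closure of a finite range. -/
lemma mem_closure_range_iff {k : ℕ} (q : Fin k → ℚ) (x : ℚ) :
    x ∈ AddSubmonoid.closure (Set.range q) ↔ ∃ c : Fin k → ℕ, x = ∑ i, (c i : ℚ) * q i := by
  constructor
  · intro hx
    induction hx using AddSubmonoid.closure_induction with
    | mem y hy =>
      obtain ⟨j, rfl⟩ := hy
      exact ⟨fun i => if i = j then 1 else 0, by simp⟩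
    | zero => exact ⟨fun _ => 0, by simp⟩
    | add y z _ _ hy hz =>
      obtain ⟨cy, rfl⟩ := hy
      obtain ⟨cz, rfl⟩ := hz
      refine ⟨fun i => cy i + cz i, ?_⟩
      rw [← Finset.sum_add_distrib]
      push_cast
      exact Finset.sum_congr rfl fun i _ => by ring
  · rintro ⟨c, rfl⟩
    refine sum_mem fun i _ => ?_
    rw [show ((c i : ℚ)) * q i = (c i) • q i by rw [nsmul_eq_mul]]
    exact nsmul_mem (AddSubmonoid.subset_closure (Set.mem_range_self i)) (c i)

lemma multiset_sum_counts {k : ℕ} {q : Fin k → ℚ} (hq : Function.Injective q)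
    (m : Multiset ℚ) (hm : ∀ x ∈ m, x ∈ Set.range q) :
    m.sum = ∑ i, (m.count (q i) : ℚ) * q i := by
  induction m using Multiset.induction_on with
  | empty => simp
  | cons x s ihs =>
    obtain ⟨j, rfl⟩ := hm x (Multiset.mem_cons_self x s)
    have hs := ihs (fun y hy => hm y (Multiset.mem_cons_of_mem hy))
    rw [Multiset.sum_cons, hs]
    have hcount : ∀ i, ((q j ::ₘ s).count (q i) : ℚ) = (s.count (q i) : ℚ) + if i = j then 1 else 0 := by
      intro i
      rw [Multiset.count_cons]
      rcases eq_or_ne i j with rfl | hij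
      · simp
      · have hne : q i ≠ q j := fun h => hij (hq h)
        simp [hne, hij]
    calc q j + ∑ i, (s.count (q i) : ℚ) * q i
        = ∑ i, ((s.count (q i) : ℚ) + if i = j then 1 else 0) * q i := by
          rw [Finset.sum_congr rfl (fun i _ => add_mul _ _ _), Finset.sum_add_distrib]
          simp [add_comm]
      _ = ∑ i, ((q j ::ₘ s).count (q i) : ℚ) * q i := by
          exact Finset.sum_congr rfl fun i _ => by rw [hcount]

lemma multiset_nonneg_sum (m : Multiset ℚ) (hm : ∀ x ∈ m, 0 ≤ x) : 0 ≤ m.sum := by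
  induction m using Multiset.induction_on with
  | empty => simp
  | cons x s ih =>
    rw [Multiset.sum_cons]
    have hx := hm x (Multiset.mem_cons_self x s)
    have hs := ih (fun y hy => hm y (Multiset.mem_cons_of_mem hy))
    linarith

lemma multiset_pos_sum_zero (m : Multiset ℚ) (hm : ∀ x ∈ m, 0 < x) (h : m.sum = 0) : m = 0 := by
  rcases Multiset.empty_or_exists_mem m with rfl | ⟨x, hx⟩
  · rfl
  · exfalso
    obtain ⟨s, rfl⟩ := Multiset.exists_cons_of_mem hx
    rw [Multiset.sum_cons] at h
    have hx0 := hm x (Multiset.mem_cons_self x s)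
    have hs := multiset_nonneg_sum s (fun y hy => le_of_lt (hm y (Multiset.mem_cons_of_mem hy)))
    linarith


lemma digits_unique' : ∀ (n : ℕ) (B : ℕ) (c e : Fin n → ℕ), (∀ i, c i < B) → (∀ i, e i < B) →
    (∑ i, c i * B ^ (i : ℕ)) = (∑ i, e i * B ^ (i : ℕ)) → c = e := digits_unique

lemma K0_lemma (k B T M N : ℕ) (hk : 2 ≤ k) (hkB : k < B) (b : Fin k → ℕ)
    (hb : ∀ i, b i = B ^ (i : ℕ)) (hT : T = ∑ i, b i) (hM : k * M + T = N)
    (hMT : (k + 1) * T < M) (c : Fin k → ℕ)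
    (hc : ∑ i, c i * (M + b i) = N) : ∀ i, c i = 1 := by
  have hbT : ∀ i, b i ≤ T := fun i =>
    hT ▸ Finset.single_le_sum (f := b) (fun _ _ => Nat.zero_le _) (Finset.mem_univ i)
  have hT1 : 1 ≤ T := by
    have := hbT ⟨0, by omega⟩
    rw [hb] at this
    simpa using (Nat.one_le_iff_ne_zero.mpr (by positivity)).trans (le_of_eq rfl) |>.trans this
  set s : ℕ := ∑ i, c i with hs_def
  have hlow : s * M ≤ ∑ i, c i * (M + b i) := by
    rw [hs_def, Finset.sum_mul]
    exact Finset.sum_le_sum fun i _ => Nat.mul_le_mul_left _ (by omega)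
  have hhigh : (∑ i, c i * (M + b i)) ≤ s * (M + T) := by
    rw [hs_def, Finset.sum_mul]
    exact Finset.sum_le_sum fun i _ => Nat.mul_le_mul_left _ (by have := hbT i; omega)
  rw [hc] at hlow hhigh
  clear_value s
  have hTT : T ≤ (k + 1) * T := Nat.le_mul_of_pos_left _ (by omega)
  have hsk : s = k := by
    rcases lt_trichotomy s k with h | h | h
    · exfalso
      have c1 : s * (M + T) ≤ (k - 1) * (M + T) := Nat.mul_le_mul_right _ (by omega)
      have c2 : (k - 1) * (M + T) + (M + T) = k * (M + T) := by
        rw [← Nat.succ_mul]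
        congr 1
        omega
      have c3 : k * (M + T) = k * M + k * T := Nat.mul_add k M T
      have c4 : k * T ≤ (k + 1) * T := Nat.mul_le_mul_right _ (by omega)
      omega
    · exact h
    · exfalso
      have c1 : (k + 1) * M ≤ s * M := Nat.mul_le_mul_right _ (by omega)
      have c2 : (k + 1) * M = k * M + M := by ring
      omega
  have hcb : ∑ i, c i * b i = T := by
    have e1 : ∑ i, c i * (M + b i) = (∑ i, c i * M) + ∑ i, c i * b i := by
      rw [← Finset.sum_add_distrib]
      exact Finset.sum_congr rfl fun i _ => by ring
    have e2 : ∑ i, c i * M = k * M := by rw [← Finset.sum_mul, ← hs_def, hsk]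
    have e3 : (∑ i, c i * M) + (∑ i, c i * b i) = k * M + T := by rw [← e1, hc, ← hM]
    rw [e2] at e3
    exact Nat.add_left_cancel e3
  have hclt : ∀ i, c i < B := by
    intro i
    have h1 : c i ≤ s := hs_def ▸
      Finset.single_le_sum (f := c) (fun _ _ => Nat.zero_le _) (Finset.mem_univ i)
    omega
  have hones : c = (fun _ : Fin k => 1) := by
    refine digits_unique' k B c (fun _ => 1) hclt (fun _ => by show 1 < B; omega) ?_
    calc ∑ i, c i * B ^ (i : ℕ) = ∑ i, c i * b i := Finset.sum_congr rfl fun i _ => by rw [hb]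
      _ = T := hcb
      _ = ∑ i : Fin k, (fun _ : Fin k => 1) i * B ^ (i : ℕ) := by
          rw [hT]
          exact Finset.sum_congr rfl fun i _ => by rw [hb]; ring
  exact fun i => congrFun hones i

lemma sum_eq_one_indicator' {k : ℕ} (c : Fin k → ℕ) (h : ∑ i, c i = 1) :
    ∃ j, ∀ i, c i = if i = j then 1 else 0 := sum_eq_one_indicator c h

lemma rat_bridge (d N z Sn t : ℕ) (hd : 0 < d) (hN : 0 < N)
    (heq : (z : ℚ) / d + (Sn : ℚ) / N = (t : ℚ) / d) : z * N + Sn * d = t * N := by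
  have hd0 : (d : ℚ) ≠ 0 := by positivity
  have hN0 : (N : ℚ) ≠ 0 := by positivity
  rw [div_add_div _ _ hd0 hN0, div_eq_div_iff (by positivity) hd0] at heq
  have e2 : ((z : ℚ) * N + (Sn : ℚ) * d) * d = ((t : ℚ) * N) * d := by
    linear_combination heq
  have e1 : (z : ℚ) * N + (Sn : ℚ) * d = (t : ℚ) * N := mul_right_cancel₀ hd0 e2
  exact_mod_cast e1

lemma rat_bridge2 (d N z Sn t : ℕ) (hd : 0 < d) (hN : 0 < N)
    (heq : (z : ℚ) / d + (Sn : ℚ) / N = (t : ℚ) / N) : z * N + Sn * d = t * d := by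
  have hd0 : (d : ℚ) ≠ 0 := by positivity
  have hN0 : (N : ℚ) ≠ 0 := by positivity
  rw [div_add_div _ _ hd0 hN0, div_eq_div_iff (by positivity) hN0] at heq
  have e2 : ((z : ℚ) * N + (Sn : ℚ) * d) * N = ((t : ℚ) * d) * N := by
    linear_combination heq
  have e1 : (z : ℚ) * N + (Sn : ℚ) * d = (t : ℚ) * d := mul_right_cancel₀ hN0 e2
  exact_mod_cast e1

lemma Kp_lemma (k d N : ℕ) (a : Fin k → ℕ) (hd : 0 < d) (hN : 0 < N)
    (hcop : N.Coprime d) (ha_pos : ∀ i, 0 < a i)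
    (hK0 : ∀ c : Fin k → ℕ, ∑ i, c i * a i = N → ∀ i, c i = 1)
    (c : Fin k → ℕ) (z t : ℕ) (ht : t ≤ d)
    (heq : z * N + (∑ i, c i * a i) * d = t * N) :
    ((∀ i, c i = 0) ∧ z = t) ∨ ((∀ i, c i = 1) ∧ z = 0 ∧ t = d) := by
  set Sn : ℕ := ∑ i, c i * a i with hSn_def
  have hzt : z ≤ t := by
    by_contra hc'
    push_neg at hc'
    have := (Nat.mul_lt_mul_right hN).mpr hc'
    omega
  obtain ⟨u, hu⟩ : ∃ u, t = z + u := ⟨t - z, by omega⟩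
  rw [hu, add_mul] at heq
  have hud : Sn * d = u * N := by omega
  have hdvd : N ∣ Sn := hcop.dvd_of_dvd_mul_right ⟨u, by rw [hud]; ring⟩
  obtain ⟨m, hm⟩ := hdvd
  have humd : u = m * d := by
    refine Nat.eq_of_mul_eq_mul_left hN ?_
    calc N * u = u * N := mul_comm _ _
      _ = Sn * d := hud.symm
      _ = (N * m) * d := by rw [hm]
      _ = N * (m * d) := by ring
  have hm1 : m ≤ 1 := by
    have h1 : m * d ≤ 1 * d := by omega
    exact Nat.le_of_mul_le_mul_right h1 hd
  rcases (by omega : m = 0 ∨ m = 1) with rfl | rfl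
  · left
    have hSn0 : Sn = 0 := by omega
    have hall : ∀ i ∈ Finset.univ, c i * a i = 0 :=
      (Finset.sum_eq_zero_iff).mp (hSn_def ▸ hSn0)
    constructor
    · intro i
      have h1 := hall i (Finset.mem_univ i)
      have h2 := ha_pos i
      rcases Nat.mul_eq_zero.mp h1 with h | h
      · exact h
      · omega
    · omega
  · right
    have hSnN : Sn = N := by omega
    refine ⟨hK0 c (hSn_def ▸ hSnN), by omega, by omega⟩

lemma Kpp_lemma (k d N M T : ℕ) (a : Fin k → ℕ) (hd : 0 < d) (hN : 0 < N)
    (hcop : N.Coprime d)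
    (halow : ∀ i, M < a i) (hahigh : ∀ i, a i ≤ M + T) (hMT : T < M)
    (ha_inj : Function.Injective a) (ha_ltN : ∀ i, a i < N)
    (c : Fin k → ℕ) (z : ℕ) (j : Fin k)
    (heq : z * N + (∑ i, c i * a i) * d = a j * d) :
    z = 0 ∧ ∀ i, c i = if i = j then 1 else 0 := by
  set Sn : ℕ := ∑ i, c i * a i with hSn_def
  have hSa : Sn ≤ a j := by
    have h1 : Sn * d ≤ a j * d := by omega
    exact Nat.le_of_mul_le_mul_right h1 hd
  obtain ⟨u, hu⟩ : ∃ u, a j = Sn + u := ⟨a j - Sn, by omega⟩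
  rw [hu, add_mul] at heq
  have hzu : z * N = u * d := by omega
  have hdvdu : N ∣ u := hcop.dvd_of_dvd_mul_right ⟨z, by rw [← hzu]; ring⟩
  have hu0 : u = 0 := by
    rcases Nat.eq_zero_or_pos u with h | h
    · exact h
    · exfalso
      have := Nat.le_of_dvd h hdvdu
      have := ha_ltN j
      omega
  subst hu0
  have hz0 : z = 0 := by
    have h1 : z * N = 0 := by omega
    rcases Nat.mul_eq_zero.mp h1 with h | h
    · exact h
    · omega
  have hSnaj : Sn = a j := by omega
  -- now analyze the size of ∑ c i
  set s : ℕ := ∑ i, c i with hs_def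
  have hlow : s * M ≤ Sn := by
    rw [hs_def, hSn_def, Finset.sum_mul]
    exact Finset.sum_le_sum fun i _ => Nat.mul_le_mul_left _ (le_of_lt (halow i))
  have hs1 : s = 1 := by
    rcases (by omega : s = 0 ∨ s = 1 ∨ 2 ≤ s) with h | h | h
    · exfalso
      have hc0 : ∀ i ∈ Finset.univ, c i = 0 := Finset.sum_eq_zero_iff.mp (hs_def ▸ h)
      have hSn0 : Sn = 0 := by
        rw [hSn_def]
        exact Finset.sum_eq_zero fun i hi => by rw [hc0 i hi, zero_mul]
      have := halow j
      omega
    · exact h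
    · exfalso
      have h1 : 2 * M ≤ s * M := Nat.mul_le_mul_right _ h
      have h2 := hahigh j
      omega
  obtain ⟨j', hj'⟩ := sum_eq_one_indicator' c (hs_def ▸ hs1)
  have hSnj' : Sn = a j' := by
    rw [hSn_def]
    have : ∀ i ∈ Finset.univ, c i * a i = (if i = j' then a j' else 0) := by
      intro i _
      rw [hj' i]
      by_cases hij : i = j'
      · subst hij; simp
      · simp [hij]
    rw [Finset.sum_congr rfl this, Finset.sum_ite_eq' Finset.univ j' (fun _ => a j')]
    simp
  have : j' = j := ha_inj (by omega : a j' = a j)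
  subst this
  exact ⟨hz0, hj'⟩




/-- `u` is an atom of the additive submonoid `H` of `ℚ`: it is a nonzero element of `H`
that is not the sum of two nonzero elements of `H`. -/
def IsAtomOf (H : AddSubmonoid ℚ) (u : ℚ) : Prop :=
  u ∈ H ∧ u ≠ 0 ∧ ∀ v ∈ H, ∀ w ∈ H, v ≠ 0 → w ≠ 0 → u ≠ v + w

/-- `z` is a factorization of `a` in `H`: a multiset of atoms of `H` with sum `a`. -/
def IsFactorizationOf (H : AddSubmonoid ℚ) (a : ℚ) (z : Multiset ℚ) : Prop :=
  (∀ x ∈ z, IsAtomOf H x) ∧ z.sum = a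

/-- Let `k ≥ 2` and let `H ⊆ ℚ_{≥0}` be a finitely generated additive
submonoid with `ℕ ⊆ H` all of whose atoms are `< 1`. Then there is a finitely generated
additive submonoid `H' ⊆ ℚ_{≥0}` containing `H`, all of whose atoms are `< 1`, such that
(a) factorizations in `H` and `H'` agree for every `u ∈ H` with `u < 1`, and
(b) there are pairwise distinct `q 1, …, q k` such that the atoms of `H'` are the
disjoint union of the atoms of `H` and `{q 1, …, q k}`, and the factorizations of `1`
in `H'` are the disjoint union of those in `H` and the single multiset `{q 1, …, q k}`. -/
theorem stmt3 (k : ℕ) (hk : 2 ≤ k) (H : AddSubmonoid ℚ) (hfg : H.FG)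
    (hpos : ∀ x ∈ H, 0 ≤ x) (hN : ∀ n : ℕ, (n : ℚ) ∈ H)
    (hatoms : ∀ u, IsAtomOf H u → u < 1) :
    ∃ H' : AddSubmonoid ℚ, H ≤ H' ∧ H'.FG ∧ (∀ x ∈ H', 0 ≤ x) ∧
      (∀ u, IsAtomOf H' u → u < 1) ∧
      (∀ u, IsAtomOf H u → IsAtomOf H' u) ∧
      (∀ u ∈ H, u < 1 → ∀ z, IsFactorizationOf H u z ↔ IsFactorizationOf H' u z) ∧
      ∃ q : Fin k → ℚ, Function.Injective q ∧
        (∀ i, ¬ IsAtomOf H (q i)) ∧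
        ({u | IsAtomOf H' u} = {u | IsAtomOf H u} ∪ Set.range q) ∧
        (¬ IsFactorizationOf H 1 (Multiset.map q Finset.univ.val)) ∧
        (∀ z, IsFactorizationOf H' 1 z ↔
          IsFactorizationOf H 1 z ∨ z = Multiset.map q Finset.univ.val) := by
  classical
  have hk0 : 0 < k := by omega
  haveI : NeZero k := ⟨by omega⟩
  obtain ⟨S, hS⟩ := hfg
  set d : ℕ := ∏ s ∈ S, s.den with hd_def
  have hd : 0 < d := Finset.prod_pos fun s _ => s.pos
  have hdvd_mem : ∀ s ∈ S, s.den ∣ d := fun s hs => Finset.dvd_prod_of_mem _ hs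
  clear_value d
  have hd0 : (d : ℚ) ≠ 0 := by positivity
  -- every element of H is n / d for some natural n
  have hrep : ∀ x ∈ H, ∃ n : ℕ, x = (n : ℚ) / d := by
    intro x hx
    have key : ∀ y ∈ H, ∃ z : ℤ, y = (z : ℚ) / d := by
      intro y hy
      rw [← hS] at hy
      induction hy using AddSubmonoid.closure_induction with
      | mem s hs =>
        have hden : s.den ∣ d := hdvd_mem s hs
        obtain ⟨e, he⟩ := hden
        refine ⟨s.num * e, ?_⟩
        have hsden : (s.den : ℚ) ≠ 0 := by positivity
        have hde : (d:ℚ) = (s.den : ℚ) * e := by exact_mod_cast he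
        have hd0' : ((s.den : ℚ)) * e ≠ 0 := by rw [← hde]; exact hd0
        have hnum : (s.num : ℚ) = s * s.den :=
          (div_eq_iff hsden).mp (Rat.num_div_den s)
        rw [hde, eq_div_iff hd0']
        push_cast
        rw [hnum]
        ring
      | zero => exact ⟨0, by simp⟩
      | add y z _ _ hy hz =>
        obtain ⟨zy, hzy⟩ := hy
        obtain ⟨zz, hzz⟩ := hz
        exact ⟨zy + zz, by rw [hzy, hzz]; push_cast; ring⟩
    obtain ⟨z, hz⟩ := key x hx
    have hz0 : 0 ≤ z := by
      have hx0 := hpos x hx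
      rw [hz] at hx0
      have h1 : (0:ℚ) ≤ (z:ℚ) := by
        by_contra hcon
        push_neg at hcon
        have : (z:ℚ)/d < 0 := div_neg_of_neg_of_pos hcon (by positivity)
        linarith
      exact_mod_cast h1
    exact ⟨z.toNat, by rw [hz]; congr 1; exact_mod_cast (Int.toNat_of_nonneg hz0).symm⟩
  -- numeric setup
  set B : ℕ := k * k with hB_def
  have hkB : k < B := by rw [hB_def]; nlinarith
  have h2B : 2 ≤ B := by omega
  have hkB' : k ∣ B := Dvd.intro k hB_def.symm
  set b : Fin k → ℕ := fun i => B ^ (i : ℕ) with hb_def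
  set T : ℕ := ∑ i, b i with hT_def
  have hbT : ∀ i, b i ≤ T := fun i =>
    Finset.single_le_sum (f := b) (fun _ _ => Nat.zero_le _) (Finset.mem_univ i)
  have hb0 : b 0 = 1 := by simp [hb_def]
  have hb_pos : ∀ i, 0 < b i := fun i => by rw [hb_def]; positivity
  have hT1 : 1 ≤ T := hb0 ▸ hbT 0
  -- T ≡ 1 mod k
  have hTk : T % k = 1 % k := by
    have hsplit : T = b 0 + ∑ i ∈ Finset.univ.erase 0, b i :=
      (Finset.add_sum_erase _ b (Finset.mem_univ 0)).symm
    have hdvd : k ∣ ∑ i ∈ Finset.univ.erase 0, b i := by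
      refine Finset.dvd_sum fun i hi => ?_
      have hi0 : (i : ℕ) ≠ 0 := by
        intro h0
        exact (Finset.mem_erase.mp hi).1 (Fin.ext h0)
      rw [hb_def]
      exact dvd_pow hkB' hi0
    obtain ⟨w, hw⟩ := hdvd
    rw [hsplit, hb0, hw, Nat.add_mul_mod_self_left]
  obtain ⟨N, hNp, hNgt, hNmod⟩ :=
    Nat.exists_prime_gt_modEq_one (k := k) ((k+1)*(k+1)*(T+d+1)) (by omega)
  have hbig : (k+1)*(k+1)*(T+d+1) < N := hNgt
  have hbound : T + d + 1 ≤ (k+1)*(k+1)*(T+d+1) := Nat.le_mul_of_pos_left _ (by positivity)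
  have hTN : T ≤ N := by omega
  have hdN : d < N := by omega
  have hN0 : 0 < N := hNp.pos
  have hNQ : (N : ℚ) ≠ 0 := by positivity
  have hkdvd : k ∣ N - T := by
    have : T % k = N % k := by
      rw [hTk]; exact hNmod.symm
    exact (Nat.modEq_iff_dvd' hTN).mp this
  set M : ℕ := (N - T) / k with hM_def
  have hkM : k * M = N - T := Nat.mul_div_cancel' hkdvd
  have hM : k * M + T = N := by rw [hkM]; omega
  have hMT : (k+1) * T < M := by
    have h1 : k*((k+1)*T) + T ≤ (k+1)*(k+1)*(T+d+1) := by nlinarith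
    have h2 : k*((k+1)*T) < k*M := by omega
    exact Nat.lt_of_mul_lt_mul_left h2
  have hTT : T ≤ (k+1) * T := Nat.le_mul_of_pos_left _ (by positivity)
  have hM0 : 0 < M := by omega
  have hMT' : T < M := by omega
  clear_value M
  clear hM_def hkM hkdvd
  set a : Fin k → ℕ := fun i => M + b i with ha_def
  have ha_pos : ∀ i, 0 < a i := fun i => Nat.add_pos_left hM0 _
  have halow : ∀ i, M < a i := fun i => Nat.lt_add_of_pos_right (hb_pos i)
  have hahigh : ∀ i, a i ≤ M + T := fun i => Nat.add_le_add_left (hbT i) M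
  have haN : ∑ i, a i = N := by
    rw [ha_def]
    rw [Finset.sum_add_distrib, Finset.sum_const, Finset.card_univ, Fintype.card_fin,
      smul_eq_mul, ← hT_def, hM]
  have ha_ltN : ∀ i, a i < N := by
    intro i
    have h1 : a i ≤ M + T := hahigh i
    have h2 : M + T < k * M + T := by
      have : 2 * M ≤ k * M := Nat.mul_le_mul_right _ hk
      omega
    omega
  have ha_inj : Function.Injective a := by
    intro i j hij
    have h1 : M + B ^ (i:ℕ) = M + B ^ (j:ℕ) := hij
    have h2 : B ^ (i:ℕ) = B ^ (j:ℕ) := by omega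
    exact Fin.ext (Nat.pow_right_injective h2B h2)
  have hcop : N.Coprime d := (Nat.Prime.coprime_iff_not_dvd hNp).mpr
    (fun hdvd => absurd (Nat.le_of_dvd hd hdvd) (by omega))
  -- the key counting fact
  have K0 : ∀ c : Fin k → ℕ, (∑ i, c i * a i) = N → ∀ i, c i = 1 := by
    intro c hc
    refine K0_lemma k B T M N hk hkB b (fun i => by rw [hb_def]) hT_def hM hMT c ?_
    rw [← hc]
  -- the new atoms
  set q : Fin k → ℚ := fun i => (a i : ℚ) / N with hq_def
  have hq_pos : ∀ i, 0 < q i := fun i => by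
    rw [hq_def]
    exact div_pos (by exact_mod_cast ha_pos i) (by positivity)
  have hq_lt1 : ∀ i, q i < 1 := fun i => by
    rw [hq_def]
    exact (div_lt_one (by positivity)).mpr (by exact_mod_cast ha_ltN i)
  have hq_ne : ∀ i, q i ≠ 0 := fun i => ne_of_gt (hq_pos i)
  have hq_inj : Function.Injective q := by
    intro i j hij
    apply ha_inj
    rw [hq_def] at hij
    simp only [div_eq_div_iff hNQ hNQ] at hij
    have : (a i : ℚ) = a j := mul_right_cancel₀ hNQ hij
    exact_mod_cast this
  have hsumq : ∀ c : Fin k → ℕ, ∑ i, (c i : ℚ) * q i = ((∑ i, c i * a i : ℕ) : ℚ) / N := by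
    intro c
    rw [Nat.cast_sum, Finset.sum_div]
    refine Finset.sum_congr rfl fun i _ => ?_
    rw [hq_def]
    push_cast
    ring
  have hsum_add : ∀ c1 c2 : Fin k → ℕ,
      ∑ i, ((c1 i + c2 i : ℕ) : ℚ) * q i = (∑ i, (c1 i : ℚ) * q i) + ∑ i, (c2 i : ℚ) * q i := by
    intro c1 c2
    rw [← Finset.sum_add_distrib]
    exact Finset.sum_congr rfl fun i _ => by push_cast; ring
  have hsum_zero : ∀ c : Fin k → ℕ, (∀ i, c i = 0) → ∑ i, (c i : ℚ) * q i = 0 :=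
    fun c hc => Finset.sum_eq_zero fun i _ => by rw [hc i]; simp
  have hqsum_nonneg : ∀ c : Fin k → ℕ, 0 ≤ ∑ i, (c i : ℚ) * q i :=
    fun c => Finset.sum_nonneg fun i _ => mul_nonneg (by positivity) (le_of_lt (hq_pos i))
  have hq_notH : ∀ i, q i ∉ H := by
    intro i hmem
    obtain ⟨n, hn⟩ := hrep _ hmem
    rw [hq_def] at hn
    simp only [div_eq_div_iff hNQ hd0] at hn
    have hnat : a i * d = n * N := by exact_mod_cast hn
    have hdvd : N ∣ a i := hcop.dvd_of_dvd_mul_right ⟨n, by rw [hnat, Nat.mul_comm]⟩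
    have := Nat.le_of_dvd (ha_pos i) hdvd
    have := ha_ltN i
    omega
  -- rational versions of the key lemmas
  have K' : ∀ (c : Fin k → ℕ) (h x : ℚ), h ∈ H → x ∈ H → x ≤ 1 →
      h + (∑ i, (c i : ℚ) * q i) = x →
      ((∀ i, c i = 0) ∧ h = x) ∨ ((∀ i, c i = 1) ∧ h = 0 ∧ x = 1) := by
    intro c h x hh hx hx1 heq
    obtain ⟨z, hz⟩ := hrep h hh
    obtain ⟨t, ht⟩ := hrep x hx
    have ht_le : t ≤ d := by
      rw [ht, div_le_one (by positivity)] at hx1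
      exact_mod_cast hx1
    have heq2 : (z:ℚ)/d + ((∑ i, c i * a i : ℕ):ℚ)/N = (t:ℚ)/d := by
      rw [← hsumq, ← hz, ← ht]; exact heq
    have hnat := rat_bridge d N z _ t hd hN0 heq2
    rcases Kp_lemma k d N a hd hN0 hcop ha_pos K0 c z t ht_le hnat with ⟨h1, h2⟩ | ⟨h1, h2, h3⟩
    · left
      exact ⟨h1, by rw [hz, ht, h2]⟩
    · right
      refine ⟨h1, ?_, ?_⟩
      · rw [hz, h2]; simp
      · rw [ht, h3, div_self hd0]
  have K'' : ∀ (c : Fin k → ℕ) (h : ℚ) (j : Fin k), h ∈ H →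
      h + (∑ i, (c i : ℚ) * q i) = q j →
      h = 0 ∧ ∀ i, c i = if i = j then 1 else 0 := by
    intro c h j hh heq
    obtain ⟨z, hz⟩ := hrep h hh
    have heq2 : (z:ℚ)/d + ((∑ i, c i * a i : ℕ):ℚ)/N = (a j:ℚ)/N := by
      have e : q j = (a j : ℚ) / N := by simp only [hq_def]
      rw [← hsumq, ← hz, ← e]; exact heq
    have hnat : z * N + (∑ i, c i * a i) * d = a j * d := rat_bridge2 d N z _ (a j) hd hN0 heq2
    obtain ⟨hz0, hc⟩ := Kpp_lemma k d N M T a hd hN0 hcop halow hahigh hMT' ha_inj ha_ltN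
      c z j hnat
    exact ⟨by rw [hz, hz0]; simp, hc⟩
  -- the new monoid
  set H' : AddSubmonoid ℚ := H ⊔ AddSubmonoid.closure (Set.range q) with hH'_def
  have hH'le : H ≤ H' := le_sup_left
  have hmemH' : ∀ x, x ∈ H' ↔ ∃ h, h ∈ H ∧ ∃ c : Fin k → ℕ, x = h + ∑ i, (c i : ℚ) * q i := by
    intro x
    rw [hH'_def, AddSubmonoid.mem_sup]
    constructor
    · rintro ⟨y, hy, w, hw, hyw⟩
      obtain ⟨c, rfl⟩ := (mem_closure_range_iff q w).mp hw
      exact ⟨y, hy, c, hyw.symm⟩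
    · rintro ⟨h, hh, c, rfl⟩
      exact ⟨h, hh, _, (mem_closure_range_iff q _).mpr ⟨c, rfl⟩, rfl⟩
  have hH'pos : ∀ x ∈ H', 0 ≤ x := by
    intro x hx
    obtain ⟨h, hh, c, rfl⟩ := (hmemH' x).mp hx
    have h1 := hpos h hh
    have h2 := hqsum_nonneg c
    linarith
  have hq_memH' : ∀ i, q i ∈ H' := fun i =>
    (le_sup_right : AddSubmonoid.closure (Set.range q) ≤ H')
      (AddSubmonoid.subset_closure (Set.mem_range_self i))
  -- each q j is an atom of H'
  have hatomq : ∀ j, IsAtomOf H' (q j) := by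
    intro j
    refine ⟨hq_memH' j, hq_ne j, ?_⟩
    intro v hv w hw hv0 hw0 hvw
    obtain ⟨h1, hh1, c1, rfl⟩ := (hmemH' v).mp hv
    obtain ⟨h2, hh2, c2, rfl⟩ := (hmemH' w).mp hw
    have heq : (h1 + h2) + ∑ i, ((c1 i + c2 i : ℕ) : ℚ) * q i = q j := by
      rw [hsum_add, hvw]; ring
    obtain ⟨hh0, hc⟩ := K'' _ _ j (add_mem hh1 hh2) heq
    have h1p := hpos h1 hh1
    have h2p := hpos h2 hh2
    have h10 : h1 = 0 := by linarith
    have h20 : h2 = 0 := by linarith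
    have hj := hc j
    rw [if_pos rfl] at hj
    rcases (by omega : c1 j = 0 ∨ c2 j = 0) with hcj | hcj
    · apply hv0
      have hall : ∀ i, c1 i = 0 := by
        intro i
        by_cases hij : i = j
        · subst hij; exact hcj
        · have := hc i; rw [if_neg hij] at this; omega
      rw [h10, hsum_zero c1 hall, add_zero]
    · apply hw0
      have hall : ∀ i, c2 i = 0 := by
        intro i
        by_cases hij : i = j
        · subst hij; exact hcj
        · have := hc i; rw [if_neg hij] at this; omega
      rw [h20, hsum_zero c2 hall, add_zero]
  -- atoms of H remain atoms of H'
  have hatomH : ∀ u, IsAtomOf H u → IsAtomOf H' u := by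
    intro u hu
    obtain ⟨huH, hu0, husplit⟩ := hu
    refine ⟨hH'le huH, hu0, ?_⟩
    intro v hv w hw hv0 hw0 hvw
    obtain ⟨h1, hh1, c1, rfl⟩ := (hmemH' v).mp hv
    obtain ⟨h2, hh2, c2, rfl⟩ := (hmemH' w).mp hw
    have hult : u < 1 := hatoms u ⟨huH, hu0, husplit⟩
    have heq : (h1 + h2) + ∑ i, ((c1 i + c2 i : ℕ) : ℚ) * q i = u := by
      rw [hsum_add, hvw]; ring
    rcases K' _ _ _ (add_mem hh1 hh2) huH (le_of_lt hult) heq with ⟨hc, _⟩ | ⟨_, _, h1u⟩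
    · have hc1 : ∀ i, c1 i = 0 := fun i => by have := hc i; omega
      have hc2 : ∀ i, c2 i = 0 := fun i => by have := hc i; omega
      have hv0' : h1 ≠ 0 := by rwa [hsum_zero c1 hc1, add_zero] at hv0
      have hw0' : h2 ≠ 0 := by rwa [hsum_zero c2 hc2, add_zero] at hw0
      exact husplit h1 hh1 h2 hh2 hv0' hw0'
        (by rw [hvw, hsum_zero c1 hc1, hsum_zero c2 hc2]; ring)
    · linarith
  -- classification of atoms of H'
  have hatom_classify : ∀ u, IsAtomOf H' u → IsAtomOf H u ∨ u ∈ Set.range q := by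
    intro u hu
    obtain ⟨huH', hu0, husplit⟩ := hu
    obtain ⟨h, hh, c, rfl⟩ := (hmemH' _).mp huH'
    by_cases hczero : ∀ i, c i = 0
    · left
      rw [hsum_zero c hczero, add_zero] at hu0 husplit ⊢
      exact ⟨hh, hu0, fun v hv w hw hv0 hw0 =>
        husplit v (hH'le hv) w (hH'le hw) hv0 hw0⟩
    · right
      push_neg at hczero
      obtain ⟨j, hj⟩ := hczero
      have hcj : 1 ≤ c j := by omega
      set c' : Fin k → ℕ := Function.update c j (c j - 1) with hc'_def
      have hsplit : ∑ i, (c i : ℚ) * q i = q j + ∑ i, (c' i : ℚ) * q i := by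
        have e1 : ∑ i, (c i : ℚ) * q i
            = (c j : ℚ) * q j + ∑ i ∈ Finset.univ.erase j, (c i : ℚ) * q i :=
          (Finset.add_sum_erase _ _ (Finset.mem_univ j)).symm
        have e2 : ∑ i, (c' i : ℚ) * q i
            = (c' j : ℚ) * q j + ∑ i ∈ Finset.univ.erase j, (c' i : ℚ) * q i :=
          (Finset.add_sum_erase _ _ (Finset.mem_univ j)).symm
        have e3 : ∑ i ∈ Finset.univ.erase j, (c' i : ℚ) * q i
            = ∑ i ∈ Finset.univ.erase j, (c i : ℚ) * q i := by
          refine Finset.sum_congr rfl fun i hi => ?_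
          rw [hc'_def, Function.update_of_ne (Finset.mem_erase.mp hi).1]
        have e4 : (c' j : ℚ) = (c j : ℚ) - 1 := by
          rw [hc'_def, Function.update_self]
          have : ((c j - 1 : ℕ) : ℚ) = (c j : ℚ) - 1 := by
            push_cast [Nat.cast_sub hcj]
            ring
          exact this
        rw [e1, e2, e3, e4]
        ring
      have hrH' : h + ∑ i, (c' i : ℚ) * q i ∈ H' := (hmemH' _).mpr ⟨h, hh, c', rfl⟩
      by_cases hr0 : h + ∑ i, (c' i : ℚ) * q i = 0
      · refine ⟨j, ?_⟩
        rw [show h + ∑ i, (c i : ℚ) * q i = q j + (h + ∑ i, (c' i : ℚ) * q i) by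
          rw [hsplit]; ring, hr0, add_zero]
      · exfalso
        exact husplit (q j) (hq_memH' j) _ hrH' (hq_ne j) hr0
          (by rw [hsplit]; ring)
  have hatomlt : ∀ u, IsAtomOf H' u → u < 1 := by
    intro u hu
    rcases hatom_classify u hu with h | ⟨i, rfl⟩
    · exact hatoms u h
    · exact hq_lt1 i
  have hatom_pos : ∀ u, IsAtomOf H u → 0 < u := fun u hu =>
    lt_of_le_of_ne (hpos u hu.1) (Ne.symm hu.2.1)
  -- splitting factorizations in H'
  have hsplitz : ∀ (x : ℚ) (z : Multiset ℚ), x ∈ H → x ≤ 1 → IsFactorizationOf H' x z →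
      IsFactorizationOf H x z ∨ (x = 1 ∧ z = Multiset.map q Finset.univ.val) := by
    intro x z hx hx1 hfz
    obtain ⟨hzat, hzsum⟩ := hfz
    set zH := z.filter (fun y => y ∈ H) with hzH_def
    set zQ := z.filter (fun y => ¬ y ∈ H) with hzQ_def
    have hz_eq : zH + zQ = z := Multiset.filter_add_not _ z
    have hzH_atom : ∀ y ∈ zH, IsAtomOf H y := by
      intro y hy
      rw [hzH_def, Multiset.mem_filter] at hy
      rcases hatom_classify y (hzat y hy.1) with h | ⟨i, rfl⟩
      · exact h
      · exact absurd hy.2 (hq_notH i)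
    have hzQ_range : ∀ y ∈ zQ, y ∈ Set.range q := by
      intro y hy
      rw [hzQ_def, Multiset.mem_filter] at hy
      rcases hatom_classify y (hzat y hy.1) with h | h
      · exact absurd h.1 hy.2
      · exact h
    have hzHsum : zH.sum ∈ H :=
      AddSubmonoid.multiset_sum_mem H zH (fun y hy => (hzH_atom y hy).1)
    set c : Fin k → ℕ := fun i => zQ.count (q i) with hc_def
    have hzQsum : zQ.sum = ∑ i, (c i : ℚ) * q i := multiset_sum_counts hq_inj zQ hzQ_range
    have heq : zH.sum + ∑ i, (c i : ℚ) * q i = x := by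
      rw [← hzQsum, ← Multiset.sum_add, hz_eq, hzsum]
    rcases K' c zH.sum x hzHsum hx hx1 heq with ⟨hc0, _⟩ | ⟨hc1, hH0, hx1'⟩
    · left
      have hzQ0 : zQ = 0 := by
        rw [Multiset.eq_zero_iff_forall_notMem]
        intro y hy
        obtain ⟨i, rfl⟩ := hzQ_range y hy
        have hcnt : 0 < zQ.count (q i) := Multiset.count_pos.mpr hy
        have e0 : zQ.count (q i) = 0 := hc0 i
        omega
      have hzzH : z = zH := by rw [← hz_eq, hzQ0, add_zero]
      exact ⟨fun y hy => hzH_atom y (hzzH ▸ hy), hzsum⟩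
    · right
      have hzH0 : zH = 0 :=
        multiset_pos_sum_zero zH (fun y hy => hatom_pos y (hzH_atom y hy)) hH0
      have hzzQ : z = zQ := by rw [← hz_eq, hzH0, zero_add]
      refine ⟨hx1', ?_⟩
      rw [hzzQ]
      refine Multiset.ext.mpr fun y => ?_
      by_cases hy : y ∈ Set.range q
      · obtain ⟨i, rfl⟩ := hy
        have e1 : (Multiset.map q Finset.univ.val).count (q i) = Finset.univ.val.count i :=
          Multiset.count_map_eq_count' q _ hq_inj i
        have e2 : Finset.univ.val.count i = 1 :=
          Multiset.count_eq_one_of_mem Finset.univ.nodup (Finset.mem_univ i)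
        have e3 : zQ.count (q i) = 1 := hc1 i
        rw [e1, e2, e3]
      · have h1 : y ∉ zQ := fun hmem => hy (hzQ_range y hmem)
        have h2 : y ∉ Multiset.map q Finset.univ.val := by
          intro hmem
          obtain ⟨i, _, rfl⟩ := Multiset.mem_map.mp hmem
          exact hy ⟨i, rfl⟩
        rw [Multiset.count_eq_zero_of_notMem h1, Multiset.count_eq_zero_of_notMem h2]
  -- the map multiset is a factorization of 1 in H'
  have hmapsum : (Multiset.map q Finset.univ.val).sum = 1 := by
    have e1 : (Multiset.map q Finset.univ.val).sum = ∑ i, q i := rfl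
    rw [e1]
    have e2 : ∑ i, q i = ((∑ i, a i : ℕ) : ℚ) / N := by
      rw [Nat.cast_sum, Finset.sum_div]
    rw [e2, haN, div_self hNQ]
  have hmapfact : IsFactorizationOf H' 1 (Multiset.map q Finset.univ.val) := by
    refine ⟨?_, hmapsum⟩
    intro y hy
    obtain ⟨i, _, rfl⟩ := Multiset.mem_map.mp hy
    exact hatomq i
  have h1H : (1:ℚ) ∈ H := by
    have := hN 1
    simpa using this
  -- final assembly
  refine ⟨H', hH'le, ?_, hH'pos, hatomlt, hatomH, ?_, q, hq_inj, ?_, ?_, ?_, ?_⟩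
  · refine (AddSubmonoid.fg_iff _).mpr ⟨↑S ∪ Set.range q, ?_,
      S.finite_toSet.union (Set.finite_range q)⟩
    rw [AddSubmonoid.closure_union, hS, ← hH'_def]
  · intro u hu hu1 z
    constructor
    · rintro ⟨hzat, hzsum⟩
      exact ⟨fun y hy => hatomH y (hzat y hy), hzsum⟩
    · intro hfz
      rcases hsplitz u z hu (le_of_lt hu1) hfz with h | ⟨h1, _⟩
      · exact h
      · exact absurd h1 (ne_of_lt hu1)
  · exact fun i hi => hq_notH i hi.1
  · ext u
    simp only [Set.mem_setOf_eq, Set.mem_union]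
    constructor
    · exact hatom_classify u
    · rintro (h | ⟨i, rfl⟩)
      · exact hatomH u h
      · exact hatomq i
  · rintro ⟨hat, _⟩
    have hmem : q ⟨0, hk0⟩ ∈ Multiset.map q Finset.univ.val :=
      Multiset.mem_map.mpr ⟨⟨0, hk0⟩, Finset.mem_univ_val _, rfl⟩
    exact hq_notH _ (hat _ hmem).1
  · intro z
    constructor
    · intro hfz
      rcases hsplitz 1 z h1H le_rfl hfz with h | ⟨_, h2⟩
      · exact Or.inl h
      · exact Or.inr h2
    · rintro (⟨hzat, hzsum⟩ | rfl)
      · exact ⟨fun y hy => hatomH y (hzat y hy), hzsum⟩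
      · exact hmapfact
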